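/- Fix real parameters σ > 0, γ > 0, g > 0 and η ≠ 0; set ω = σγη and β = 2σ²/g, and define u(t) = cosh(ωt) + (ω/β)sinh(ωt) and v(t) = cosh(ωt) + (β/ω)sinh(ωt), which satisfy u(t) ≥ 1 and v(t) ≥ 1 for all t ≥ 0. Let p₀, Q₀ ∈ ℝ. Then the functions a(t) = g·v(t)/u(t), P(t) = p₀/u(t), Q(t) = (Q₀ − ηβ(u(t) − 1)/ω²)/v(t), and c(t) = 1/√(v(t)) satisfy a(0) = g, P(0) = p₀, Q(0) = Q₀, c(0) = 1, and for every t ≥ 0: a'(t) = 2σ² − (γ²η²/2)a(t)², P'(t) = −(γ²η²/2)a(t)P(t), Q'(t) = −(2σ²/a(t))Q(t) − η, and c'(t) = −(σ²/a(t))c(t). -/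

import Mathlib

/-- The explicit functions `a = g·v/u`, `P = p₀/u`,
`Q = (Q₀ − ηβ(u−1)/ω²)/v`, `c = 1/√v`, with
`u(t) = cosh(ωt) + (ω/β)sinh(ωt)`, `v(t) = cosh(ωt) + (β/ω)sinh(ωt)`,
`ω = σγη`, `β = 2σ²/g`, solve the parameter ODE system of the Gaussian
wave-packet Ansatz with initial data `a(0)=g, P(0)=p₀, Q(0)=Q₀, c(0)=1`. -/
theorem stmt1 (σ γ g η : ℝ) (hσ : 0 < σ) (hγ : 0 < γ) (hg : 0 < g) (hη : η ≠ 0)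
    (p₀ Q₀ : ℝ) (ω β : ℝ) (hω : ω = σ * γ * η) (hβ : β = 2 * σ ^ 2 / g)
    (u v a P Q c : ℝ → ℝ)
    (hu : ∀ t, u t = Real.cosh (ω * t) + (ω / β) * Real.sinh (ω * t))
    (hv : ∀ t, v t = Real.cosh (ω * t) + (β / ω) * Real.sinh (ω * t))
    (ha : ∀ t, a t = g * v t / u t)
    (hP : ∀ t, P t = p₀ / u t)
    (hQ : ∀ t, Q t = (Q₀ - η * β * (u t - 1) / ω ^ 2) / v t)
    (hc : ∀ t, c t = 1 / Real.sqrt (v t)) :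
    (∀ t ≥ 0, 1 ≤ u t ∧ 1 ≤ v t) ∧
    a 0 = g ∧ P 0 = p₀ ∧ Q 0 = Q₀ ∧ c 0 = 1 ∧
    ∀ t ≥ 0,
      HasDerivAt a (2 * σ ^ 2 - γ ^ 2 * η ^ 2 / 2 * (a t) ^ 2) t ∧
      HasDerivAt P (-(γ ^ 2 * η ^ 2 / 2) * a t * P t) t ∧
      HasDerivAt Q (-(2 * σ ^ 2 / a t) * Q t - η) t ∧
      HasDerivAt c (-(σ ^ 2 / a t) * c t) t := by
  have hβ0 : 0 < β := by rw [hβ]; positivity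
  have hω0 : ω ≠ 0 := by rw [hω]; exact mul_ne_zero (mul_ne_zero hσ.ne' hγ.ne') hη
  -- positivity of u, v
  have hkey : ∀ t ≥ 0, 1 ≤ u t ∧ 1 ≤ v t := by
    intro t ht
    have h1 : 0 ≤ ω * Real.sinh (ω * t) := by
      rcases le_or_gt 0 ω with h | h
      · exact mul_nonneg h (Real.sinh_nonneg_iff.2 (mul_nonneg h ht))
      · have hs := Real.sinh_nonpos_iff.2 (mul_nonpos_of_nonpos_of_nonneg h.le ht)
        nlinarith
    have hch := Real.one_le_cosh (ω * t)
    constructor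
    · rw [hu t]
      have h2 : 0 ≤ ω / β * Real.sinh (ω * t) := by
        rw [div_mul_eq_mul_div]
        exact div_nonneg h1 hβ0.le
      linarith
    · rw [hv t]
      have h2 : 0 ≤ β / ω * Real.sinh (ω * t) := by
        have : β / ω * Real.sinh (ω * t) = β * (ω * Real.sinh (ω * t)) / ω ^ 2 := by
          field_simp
        rw [this]
        exact div_nonneg (mul_nonneg hβ0.le h1) (sq_nonneg ω)
      linarith
  -- derivatives of u and v
  have hu' : ∀ t, HasDerivAt u (ω ^ 2 / β * v t) t := by
    intro t
    have h1 : HasDerivAt (fun s : ℝ => ω * s) ω t := by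
      simpa using (hasDerivAt_id t).const_mul ω
    have h2 : HasDerivAt (fun s : ℝ => Real.cosh (ω * s)) (Real.sinh (ω * t) * ω) t :=
      (Real.hasDerivAt_cosh (ω * t)).comp t h1
    have h3 : HasDerivAt (fun s : ℝ => Real.sinh (ω * s)) (Real.cosh (ω * t) * ω) t :=
      (Real.hasDerivAt_sinh (ω * t)).comp t h1
    have h4 := h2.add (h3.const_mul (ω / β))
    have he : u = fun s => Real.cosh (ω * s) + ω / β * Real.sinh (ω * s) := funext hu
    rw [he]
    refine h4.congr_deriv ?_
    rw [hv t]
    field_simp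
    ring
  have hv' : ∀ t, HasDerivAt v (β * u t) t := by
    intro t
    have h1 : HasDerivAt (fun s : ℝ => ω * s) ω t := by
      simpa using (hasDerivAt_id t).const_mul ω
    have h2 : HasDerivAt (fun s : ℝ => Real.cosh (ω * s)) (Real.sinh (ω * t) * ω) t :=
      (Real.hasDerivAt_cosh (ω * t)).comp t h1
    have h3 : HasDerivAt (fun s : ℝ => Real.sinh (ω * s)) (Real.cosh (ω * t) * ω) t :=
      (Real.hasDerivAt_sinh (ω * t)).comp t h1
    have h4 := h2.add (h3.const_mul (β / ω))
    have he : v = fun s => Real.cosh (ω * s) + β / ω * Real.sinh (ω * s) := funext hv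
    rw [he]
    refine h4.congr_deriv ?_
    rw [hu t]
    field_simp
    ring
  have hu0 : ∀ t ≥ 0, 0 < u t := fun t ht => lt_of_lt_of_le one_pos (hkey t ht).1
  have hv0 : ∀ t ≥ 0, 0 < v t := fun t ht => lt_of_lt_of_le one_pos (hkey t ht).2
  have hu00 : u 0 = 1 := by rw [hu 0]; simp
  have hv00 : v 0 = 1 := by rw [hv 0]; simp
  refine ⟨hkey, by rw [ha 0, hu00, hv00]; ring, by rw [hP 0, hu00]; ring,
    by rw [hQ 0, hu00, hv00]; simp, by rw [hc 0, hv00]; simp, ?_⟩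
  intro t ht
  have hut := (hu0 t ht).ne'
  have hvt := (hv0 t ht).ne'
  refine ⟨?_, ?_, ?_, ?_⟩
  · -- a
    have he : a = fun s => g * v s / u s := funext ha
    rw [he]
    have hd := (((hv' t).const_mul g)).div (hu' t) hut
    refine hd.congr_deriv ?_
    simp only [ha]
    subst hω hβ
    field_simp
  · -- P
    have he : P = fun s => p₀ / u s := funext hP
    rw [he]
    have hd := (hasDerivAt_const t p₀).div (hu' t) hut
    refine hd.congr_deriv ?_
    simp only [ha]
    subst hω hβ
    field_simp
    ring
  · -- Q
    have he : Q = fun s => (Q₀ - η * β / ω ^ 2 * (u s - 1)) / v s := by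
      funext s; rw [hQ s]; ring_nf
    rw [he]
    have hnum : HasDerivAt (fun s => Q₀ - η * β / ω ^ 2 * (u s - 1))
        (-(η * β / ω ^ 2 * (ω ^ 2 / β * v t))) t := by
      have := (((hu' t).sub_const 1).const_mul (η * β / ω ^ 2)).const_sub Q₀
      simpa using this
    have hd := hnum.div (hv' t) hvt
    refine hd.congr_deriv ?_
    simp only [ha]
    subst hβ
    field_simp
    ring
  · -- c
    have he : c = fun s => (Real.sqrt (v s))⁻¹ := by
      funext s; rw [hc s, one_div]
    rw [he]
    have hsq : Real.sqrt (v t) ≠ 0 := by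
      have := Real.sqrt_pos.2 (hv0 t ht)
      exact this.ne'
    have hd1 : HasDerivAt (fun s => Real.sqrt (v s)) (1 / (2 * Real.sqrt (v t)) * (β * u t)) t :=
      (Real.hasDerivAt_sqrt hvt).comp t (hv' t)
    have hd := hd1.inv hsq
    refine hd.congr_deriv ?_
    simp only [ha]
    rw [Real.sq_sqrt (hv0 t ht).le]
    subst hβ
    field_simp
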